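/- Let A be a sequence of n real numbers in which every element is nonnegative, or every element is nonpositive ('type 1'). Then for any real x and any p ∈ {0,...,n}, mcs(ins(A,p,x)) = max(0, sum(A)) + max(0, x). -/

import Mathlib

noncomputable section

/-- Sum of the contiguous subsequence A[j..i]. -/
def seg (A : ℕ → ℝ) (j i : ℕ) : ℝ := ∑ t ∈ Finset.Icc j i, A t

/-- Maximal sum at element i: max over j ≤ i of sum A[j..i]. -/
def MS (A : ℕ → ℝ) (i : ℕ) : ℝ :=
  (Finset.range (i+1)).sup' (Finset.nonempty_range_iff.mpr (Nat.succ_ne_zero i))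
    (fun j => seg A j i)

/-- Maximal sum of a contiguous, possibly empty, subsequence of A[0..n-1]. -/
def maxsum (A : ℕ → ℝ) (n : ℕ) : ℝ :=
  Finset.fold max 0 (fun q => seg A q.1 q.2)
    (Finset.filter (fun q => q.1 ≤ q.2) ((Finset.range n) ×ˢ (Finset.range n)))

/-- Insertion of x between A[p-1] and A[p]. -/
def ins (A : ℕ → ℝ) (p : ℕ) (x : ℝ) : ℕ → ℝ :=
  fun i => if i < p then A i else if i = p then x else A (i - 1)

/-- Sum of the circular subsequence A⟨j..i⟩ of a sequence of length n. -/
def circseg (A : ℕ → ℝ) (n j i : ℕ) : ℝ :=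
  if j ≤ i then seg A j i else seg A j (n-1) + seg A 0 i

/-- Maximal circular sum at element i. -/
def MCS (A : ℕ → ℝ) (n i : ℕ) : ℝ :=
  if h : 0 < n then
    (Finset.range n).sup' (Finset.nonempty_range_iff.mpr h.ne')
      (fun j => circseg A n j i)
  else 0

/-- Maximal circular sum of a possibly empty circular subsequence. -/
def mcs (A : ℕ → ℝ) (n : ℕ) : ℝ :=
  Finset.fold max 0 (fun q => circseg A n q.1 q.2)
    ((Finset.range n) ×ˢ (Finset.range n))

/-- OMCS A n i = i ⊖ j*, where j* is the largest j with sum A⟨(i⊖j)..i⟩ = MCS A n i. -/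
def OMCS (A : ℕ → ℝ) (n i : ℕ) : ℕ :=
  (i + n - ((Finset.filter
      (fun j => circseg A n ((i + n - j) % n) i = MCS A n i)
      (Finset.range n)).max.getD 0)) % n

/-- h belongs to the circular range from a to b (indices mod n). -/
def inCircRange (n a b h : ℕ) : Prop :=
  (a ≤ b ∧ a ≤ h ∧ h ≤ b) ∨ (b < a ∧ ((a ≤ h ∧ h < n) ∨ h ≤ b))

/-- The (noncircular) interval partition of A into L intervals A[α i .. β i]. -/
def IntervalPartition (A : ℕ → ℝ) (n L : ℕ) (α β : ℕ → ℕ) : Prop :=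
  0 < L ∧ 0 < n ∧ α 0 = 0 ∧ β (L-1) = n-1 ∧
  (∀ i, i + 1 < L → α (i+1) = β i + 1) ∧
  (∀ i, i < L → α i ≤ β i) ∧
  (∀ i, i < L → ∀ j, α i ≤ j → j ≤ β i →
     (j ≠ β i → 0 ≤ MS A j) ∧ (j = β i → i < L - 1 → MS A j < 0))

private lemma key_le (A : ℕ → ℝ) (n : ℕ)
    (h1 : (∀ i, i < n → 0 ≤ A i) ∨ (∀ i, i < n → A i ≤ 0))
    (x : ℝ) (p : ℕ) (hp : p ≤ n)
    (s : Finset ℕ) (hs : ∀ t ∈ s, t ≤ n) :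
    ∑ t ∈ s, ins A p x t ≤ max 0 (∑ i ∈ Finset.range n, A i) + max 0 x := by
  classical
  set σ : ℕ → ℕ := fun t => if t < p then t else t - 1 with hσ
  have hcong : ∑ t ∈ s.erase p, ins A p x t = ∑ t ∈ s.erase p, A (σ t) := by
    refine Finset.sum_congr rfl fun t ht => ?_
    have htp : t ≠ p := Finset.ne_of_mem_erase ht
    by_cases h : t < p
    · simp [ins, hσ, h]
    · simp [ins, hσ, h, htp]
  have hinj : ∀ t1 ∈ s.erase p, ∀ t2 ∈ s.erase p, σ t1 = σ t2 → t1 = t2 := by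
    intro t1 h1' t2 h2' heq
    have e1 := Finset.ne_of_mem_erase h1'
    have e2 := Finset.ne_of_mem_erase h2'
    simp only [hσ] at heq
    split_ifs at heq <;> omega
  have himg : ∑ t ∈ s.erase p, A (σ t) = ∑ u ∈ (s.erase p).image σ, A u :=
    (Finset.sum_image hinj).symm
  have hsub : (s.erase p).image σ ⊆ Finset.range n := by
    intro u hu
    simp only [Finset.mem_image] at hu
    obtain ⟨t, ht, rfl⟩ := hu
    have h1' := hs t (Finset.mem_of_mem_erase ht)
    have h2' := Finset.ne_of_mem_erase ht
    simp only [hσ, Finset.mem_range]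
    split_ifs <;> omega
  have hstep : ∑ t ∈ s.erase p, ins A p x t ≤ max 0 (∑ i ∈ Finset.range n, A i) := by
    rw [hcong, himg]
    rcases h1 with h1 | h1
    · refine le_trans (Finset.sum_le_sum_of_subset_of_nonneg hsub
        (fun i hi _ => h1 i (Finset.mem_range.mp hi))) (le_max_right _ _)
    · exact le_trans (Finset.sum_nonpos fun u hu =>
        h1 u (Finset.mem_range.mp (hsub hu))) (le_max_left _ _)
  have hx : (if p ∈ s then x else 0) ≤ max 0 x := by
    split_ifs
    · exact le_max_right 0 x
    · exact le_max_left 0 x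
  have hsum : ∑ t ∈ s, ins A p x t
      = (∑ t ∈ s.erase p, ins A p x t) + (if p ∈ s then x else 0) := by
    split_ifs with h
    · rw [← Finset.sum_erase_add s _ h]
      simp [ins]
    · rw [Finset.erase_eq_of_notMem h, add_zero]
  rw [hsum]
  exact add_le_add hstep hx

private lemma sum_ins_range (A : ℕ → ℝ) (n : ℕ) (x : ℝ) (p : ℕ) (hp : p ≤ n) :
    ∑ t ∈ Finset.range (n+1), ins A p x t = x + ∑ i ∈ Finset.range n, A i := by
  rw [Finset.range_eq_Ico, Finset.range_eq_Ico,
      ← Finset.sum_Ico_consecutive (fun t => ins A p x t) (Nat.zero_le p) (by omega : p ≤ n+1),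
      ← Finset.sum_Ico_consecutive A (Nat.zero_le p) hp,
      Finset.sum_eq_sum_Ico_succ_bot (by omega : p < n+1)]
  have h1 : ∑ t ∈ Finset.Ico 0 p, ins A p x t = ∑ t ∈ Finset.Ico 0 p, A t :=
    Finset.sum_congr rfl fun t ht => by
      simp only [ins, if_pos (Finset.mem_Ico.mp ht).2]
  have h2 : ∑ t ∈ Finset.Ico (p+1) (n+1), ins A p x t = ∑ t ∈ Finset.Ico p n, A t := by
    rw [Finset.sum_Ico_eq_sum_range, Finset.sum_Ico_eq_sum_range]
    have : n + 1 - (p + 1) = n - p := by omega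
    rw [this]
    refine Finset.sum_congr rfl fun i _ => ?_
    simp only [ins]
    rw [if_neg (by omega), if_neg (by omega)]
    congr 1
    omega
  have hpx : ins A p x p = x := by simp [ins]
  rw [h1, h2, hpx]
  ring

theorem stmt17 (A : ℕ → ℝ) (n : ℕ)
    (h1 : (∀ i, i < n → 0 ≤ A i) ∨ (∀ i, i < n → A i ≤ 0))
    (x : ℝ) (p : ℕ) (hp : p ≤ n) :
    mcs (ins A p x) (n+1) = max 0 (∑ i ∈ Finset.range n, A i) + max 0 x := by
  classical
  have hIcc : Finset.Icc 0 n = Finset.range (n+1) := by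
    ext t; simp [Finset.mem_Icc, Finset.mem_range]
  apply le_antisymm
  · unfold mcs
    rw [Finset.fold_max_le]
    refine ⟨add_nonneg (le_max_left 0 _) (le_max_left 0 _), ?_⟩
    rintro ⟨j, i⟩ hq
    simp only [Finset.mem_product, Finset.mem_range] at hq
    simp only [circseg]
    split_ifs with hji
    · exact key_le A n h1 x p hp (Finset.Icc j i)
        (fun t ht => by have := Finset.mem_Icc.mp ht; omega)
    · have hd : Disjoint (Finset.Icc j (n+1-1)) (Finset.Icc 0 i) := by
        rw [Finset.disjoint_left]
        intro t ht ht'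
        have := Finset.mem_Icc.mp ht
        have := Finset.mem_Icc.mp ht'
        omega
      show seg (ins A p x) j (n+1-1) + seg (ins A p x) 0 i ≤ _
      unfold seg
      rw [← Finset.sum_union hd]
      refine key_le A n h1 x p hp _ (fun t ht => ?_)
      rcases Finset.mem_union.mp ht with h | h <;>
        · have := Finset.mem_Icc.mp h; omega
  · unfold mcs
    rw [Finset.le_fold_max]
    rcases h1 with hpos | hneg
    · have hsA : (0:ℝ) ≤ ∑ i ∈ Finset.range n, A i :=
        Finset.sum_nonneg fun i hi => hpos i (Finset.mem_range.mp hi)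
      rw [max_eq_right hsA]
      by_cases hx : 0 ≤ x
      · right
        refine ⟨(0, n), ?_, ?_⟩
        · simp [Finset.mem_product]
        · simp only [circseg, if_pos (Nat.zero_le n)]
          have : seg (ins A p x) 0 n = x + ∑ i ∈ Finset.range n, A i := by
            unfold seg
            rw [hIcc]
            exact sum_ins_range A n x p hp
          rw [this, max_eq_right hx]
          linarith
      · rw [max_eq_left (le_of_lt (not_le.mp hx)), add_zero]
        by_cases hn : n = 0
        · left; simp [hn]
        · right
          have hn1 : 1 ≤ n := by omega
          by_cases hp0 : p = 0
          · refine ⟨(1, n), ?_, ?_⟩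
            · simp [Finset.mem_product]; omega
            · simp only [circseg, if_pos hn1]
              apply le_of_eq
              unfold seg
              rw [← Finset.Ico_add_one_right_eq_Icc, Finset.sum_Ico_eq_sum_range]
              have : n + 1 - 1 = n := by omega
              rw [this]
              refine (Finset.sum_congr rfl fun i _ => ?_).symm
              simp only [ins, hp0]
              rw [if_neg (by omega), if_neg (by omega)]
              congr 1
              omega
          · by_cases hpn : p = n
            · refine ⟨(0, n-1), ?_, ?_⟩
              · simp [Finset.mem_product]
              · simp only [circseg, if_pos (Nat.zero_le (n-1))]
                apply le_of_eq
                unfold seg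
                have : Finset.Icc 0 (n-1) = Finset.range n := by
                  ext t; simp [Finset.mem_Icc, Finset.mem_range]; omega
                rw [this]
                refine (Finset.sum_congr rfl fun t ht => ?_).symm
                have := Finset.mem_range.mp ht
                simp only [ins]
                rw [if_pos (by omega)]
            · -- 0 < p < n : wrap segment (p+1, p-1)
              refine ⟨(p+1, p-1), ?_, ?_⟩
              · simp [Finset.mem_product]; omega
              · have hnle : ¬ (p+1 ≤ p-1) := by omega
                simp only [circseg, if_neg hnle]
                apply le_of_eq
                have e1 : seg (ins A p x) (p+1) (n+1-1) = ∑ t ∈ Finset.Ico p n, A t := by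
                  unfold seg
                  have : n + 1 - 1 = n := by omega
                  rw [this, ← Finset.Ico_add_one_right_eq_Icc, Finset.sum_Ico_eq_sum_range,
                      Finset.sum_Ico_eq_sum_range]
                  have : n + 1 - (p + 1) = n - p := by omega
                  rw [this]
                  refine Finset.sum_congr rfl fun i _ => ?_
                  simp only [ins]
                  rw [if_neg (by omega), if_neg (by omega)]
                  congr 1
                  omega
                have e2 : seg (ins A p x) 0 (p-1) = ∑ t ∈ Finset.range p, A t := by
                  unfold seg
                  have : Finset.Icc 0 (p-1) = Finset.range p := by
                    ext t; simp [Finset.mem_Icc, Finset.mem_range]; omega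
                  rw [this]
                  refine Finset.sum_congr rfl fun t ht => ?_
                  have := Finset.mem_range.mp ht
                  simp only [ins]
                  rw [if_pos (by omega)]
                rw [e1, e2, Finset.range_eq_Ico, Finset.range_eq_Ico, add_comm,
                    Finset.sum_Ico_consecutive A (Nat.zero_le p) (by omega : p ≤ n)]
    · have hsA : (∑ i ∈ Finset.range n, A i) ≤ 0 :=
        Finset.sum_nonpos fun i hi => hneg i (Finset.mem_range.mp hi)
      rw [max_eq_left hsA, zero_add]
      by_cases hx : 0 ≤ x
      · right
        refine ⟨(p, p), ?_, ?_⟩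
        · simp [Finset.mem_product]; omega
        · simp only [circseg, if_pos (le_refl p)]
          unfold seg
          rw [Finset.Icc_self, Finset.sum_singleton]
          simp [ins, max_eq_right hx]
      · left
        rw [max_eq_left (le_of_lt (not_le.mp hx))]
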